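/- Let L be an 8-dimensional Lie algebra over a field with basis x₁, ..., x₈ and nonzero brackets [x₁,x₂] = x₆, [x₁,x₄] = x₈, [x₃,x₅] = x₈, [x₂,x₇] = x₈, [x₄,x₇] = x₈. Then L is isomorphic to the direct sum H(1) ⊕ H(2). -/

import Mathlib

/-- The Lie algebra `H(1) ⊕ H(2)`: carrier `((Fin 2 → K) × K) × ((Fin 4 → K) × K)`,
each factor a Heisenberg Lie algebra with the second coordinate its centre. -/
abbrev H1H2 (K : Type*) : Type _ := ((Fin 2 → K) × K) × ((Fin 4 → K) × K)

namespace H1H2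

variable {K : Type*} [Field K]

def w2 (a b : Fin 2 → K) : K := a 0 * b 1 - a 1 * b 0

def w4 (a b : Fin 4 → K) : K := a 0 * b 1 - a 1 * b 0 + (a 2 * b 3 - a 3 * b 2)

/-- The bracket on `H(1) ⊕ H(2)`. -/
def brkt (x y : H1H2 K) : H1H2 K := ((0, w2 x.1.1 y.1.1), (0, w4 x.2.1 y.2.1))

instance : LieRing (H1H2 K) :=
  { (inferInstanceAs (AddCommGroup (H1H2 K)) : AddCommGroup (H1H2 K)) with
    bracket := brkt
    add_lie := fun x y z => by
      show brkt (x + y) z = brkt x z + brkt y z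
      simp only [brkt, w2, w4, Prod.ext_iff, Prod.fst_add, Prod.snd_add, Prod.mk_add_mk,
        Pi.add_apply, add_zero]
      exact ⟨⟨by simp, by ring⟩, ⟨by simp, by ring⟩⟩
    lie_add := fun x y z => by
      show brkt x (y + z) = brkt x y + brkt x z
      simp only [brkt, w2, w4, Prod.ext_iff, Prod.fst_add, Prod.snd_add, Prod.mk_add_mk,
        Pi.add_apply, add_zero]
      exact ⟨⟨by simp, by ring⟩, ⟨by simp, by ring⟩⟩
    lie_self := fun x => by
      show brkt x x = 0
      simp only [brkt, w2, w4, Prod.ext_iff, Prod.fst_zero, Prod.snd_zero]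
      exact ⟨⟨by simp, by ring⟩, ⟨by simp, by ring⟩⟩
    leibniz_lie := fun x y z => by
      show brkt x (brkt y z) = brkt (brkt x y) z + brkt y (brkt x z)
      simp only [brkt, w2, w4, Prod.ext_iff, Prod.fst_add, Prod.snd_add, Prod.mk_add_mk,
        Pi.zero_apply, add_zero]
      exact ⟨⟨by simp, by ring⟩, ⟨by simp, by ring⟩⟩ }

instance : LieAlgebra K (H1H2 K) :=
  { (inferInstanceAs (Module K (H1H2 K)) : Module K (H1H2 K)) with
    lie_smul := fun a x y => by
      show brkt x (a • y) = a • brkt x y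
      simp only [brkt, w2, w4, Prod.ext_iff, Prod.smul_fst, Prod.smul_snd, Prod.smul_mk,
        Pi.smul_apply, smul_eq_mul, smul_zero]
      exact ⟨⟨by simp, by ring⟩, ⟨by simp, by ring⟩⟩ }

end H1H2


section Aux4

variable {K : Type*} [Field K] {L : Type*} [LieRing L] [LieAlgebra K L]

lemma H1H2.lie_def (x y : H1H2 K) : ⁅x, y⁆ = H1H2.brkt x y := rfl

/-- Images of the basis vectors. -/
def eAux : Fin 8 → H1H2 K :=
  ![((![1,0], 0), (![0,0,0,-1], 0)),
    ((![0,1], 0), (![0,0,1,0], 0)),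
    ((![0,0], 0), (![1,0,0,0], 0)),
    ((![0,0], 0), (![0,0,1,0], 0)),
    ((![0,0], 0), (![0,1,0,0], 0)),
    ((![0,0], 1), (![0,0,0,0], 1)),
    ((![0,0], 0), (![0,0,0,1], 0)),
    ((![0,0], 0), (![0,0,0,0], 1))]


lemma eAux_0 : (eAux 0 : H1H2 K) = ((![1,0], 0), (![0,0,0,-1], 0)) := rfl
lemma eAux_1 : (eAux 1 : H1H2 K) = ((![0,1], 0), (![0,0,1,0], 0)) := rfl
lemma eAux_2 : (eAux 2 : H1H2 K) = ((![0,0], 0), (![1,0,0,0], 0)) := rfl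
lemma eAux_3 : (eAux 3 : H1H2 K) = ((![0,0], 0), (![0,0,1,0], 0)) := rfl
lemma eAux_4 : (eAux 4 : H1H2 K) = ((![0,0], 0), (![0,1,0,0], 0)) := rfl
lemma eAux_5 : (eAux 5 : H1H2 K) = ((![0,0], 1), (![0,0,0,0], 1)) := rfl
lemma eAux_6 : (eAux 6 : H1H2 K) = ((![0,0], 0), (![0,0,0,1], 0)) := rfl
lemma eAux_7 : (eAux 7 : H1H2 K) = ((![0,0], 0), (![0,0,0,0], 1)) := rfl

/-- The inverse linear map. -/
noncomputable def gAux (b : Module.Basis (Fin 8) K L) : H1H2 K →ₗ[K] L where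
  toFun x := x.1.1 0 • (b 0 + b 6) + x.1.1 1 • (b 1 - b 3) + x.1.2 • (b 5 - b 7)
    + x.2.1 0 • b 2 + x.2.1 1 • b 4 + x.2.1 2 • b 3 + x.2.1 3 • b 6 + x.2.2 • b 7
  map_add' x y := by
    simp only [Prod.fst_add, Prod.snd_add, Pi.add_apply, add_smul]
    abel
  map_smul' c x := by
    simp only [Prod.smul_fst, Prod.smul_snd, Pi.smul_apply, smul_eq_mul, mul_smul,
      RingHom.id_apply, smul_add, smul_sub]

end Aux4

set_option maxHeartbeats 1600000 in
/-- the 8-dimensional Lie algebra with nonzero brackets [x₁,x₂]=x₆, [x₁,x₄]=x₈, [x₃,x₅]=x₈, [x₂,x₇]=x₈, [x₄,x₇]=x₈ is isomorphic to H(1) ⊕ H(2). -/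
theorem stmt_4 (K : Type*) [Field K] (L : Type*) [LieRing L] [LieAlgebra K L]
    (b : Module.Basis (Fin 8) K L)
    (h12 : ⁅b 0, b 1⁆ = b 5)
    (h14 : ⁅b 0, b 3⁆ = b 7)
    (h35 : ⁅b 2, b 4⁆ = b 7)
    (h27 : ⁅b 1, b 6⁆ = b 7)
    (h47 : ⁅b 3, b 6⁆ = b 7)
    (hzero : ∀ i j : Fin 8,
      (i, j) ∉ ({(0,1),(1,0),(0,3),(3,0),(2,4),(4,2),(1,6),(6,1),(3,6),(6,3)} : Set (Fin 8 × Fin 8)) → ⁅b i, b j⁆ = 0) :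
    Nonempty (L ≃ₗ⁅K⁆ H1H2 K) := by
  classical
  set f : L →ₗ[K] H1H2 K := b.constr K eAux with hf
  have hfb : ∀ i, f (b i) = eAux i := fun i => b.constr_basis K eAux i
  have key : ∀ i j : Fin 8, f ⁅b i, b j⁆ = ⁅f (b i), f (b j)⁆ := by
    intro i j
    have hz : ∀ i j : Fin 8,
        (i, j) ∉ ({(0,1),(1,0),(0,3),(3,0),(2,4),(4,2),(1,6),(6,1),(3,6),(6,3)} :
          Set (Fin 8 × Fin 8)) → ⁅b i, b j⁆ = 0 := hzero
    fin_cases i <;> fin_cases j <;>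
      simp only [Fin.zero_eta, Fin.mk_one, Fin.reduceFinMk, Fin.isValue, hfb, H1H2.lie_def] <;>
      first
      | (rw [hz _ _ (by simp only [Set.mem_insert_iff, Set.mem_singleton_iff, Prod.mk.injEq]; decide)]
         simp [H1H2.brkt, H1H2.w2, H1H2.w4, eAux_0, eAux_1, eAux_2, eAux_3, eAux_4, eAux_5, eAux_6, eAux_7, Prod.ext_iff])
      | (first
          | rw [h12] | rw [h14] | rw [h35] | rw [h27] | rw [h47]
          | rw [← lie_skew, h12] | rw [← lie_skew, h14] | rw [← lie_skew, h35]
          | rw [← lie_skew, h27] | rw [← lie_skew, h47]) <;>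
        simp [hfb, H1H2.brkt, H1H2.w2, H1H2.w4, eAux_0, eAux_1, eAux_2, eAux_3, eAux_4, eAux_5, eAux_6, eAux_7, Prod.ext_iff]
  have hgf : (gAux b).comp f = LinearMap.id := by
    refine b.ext fun i => ?_
    rw [LinearMap.comp_apply, hfb, LinearMap.id_apply]
    fin_cases i <;>
      simp [gAux, eAux_0, eAux_1, eAux_2, eAux_3, eAux_4, eAux_5, eAux_6, eAux_7] <;> module
  have hfg : ∀ x : H1H2 K, f (gAux b x) = x := by
    intro x
    have hg : gAux b x = x.1.1 0 • (b 0 + b 6) + x.1.1 1 • (b 1 - b 3) + x.1.2 • (b 5 - b 7)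
        + x.2.1 0 • b 2 + x.2.1 1 • b 4 + x.2.1 2 • b 3 + x.2.1 3 • b 6 + x.2.2 • b 7 := rfl
    rw [hg]
    simp only [map_add, map_smul, map_sub, hfb, eAux_0, eAux_1, eAux_2, eAux_3, eAux_4,
      eAux_5, eAux_6, eAux_7]
    refine Prod.ext (Prod.ext ?_ ?_) (Prod.ext ?_ ?_) <;>
      simp only [Prod.fst_add, Prod.snd_add, Prod.smul_fst, Prod.smul_snd, Prod.fst_sub,
        Prod.snd_sub, smul_eq_mul]
    · funext k
      fin_cases k <;>
        simp [Matrix.cons_val_zero, Matrix.cons_val_one, Matrix.head_cons] <;> ring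
    · simp
    · funext k
      fin_cases k <;>
        simp [Matrix.cons_val_zero, Matrix.cons_val_one, Matrix.head_cons] <;> ring
    · simp
  have hmaplie : ∀ x y : L, f ⁅x, y⁆ = ⁅f x, f y⁆ := by
    let D : L →ₗ[K] L →ₗ[K] H1H2 K :=
      LinearMap.mk₂ K (fun x y => f ⁅x, y⁆ - ⁅f x, f y⁆)
        (fun x x' y => by
          show f ⁅x + x', y⁆ - ⁅f (x + x'), f y⁆
              = (f ⁅x, y⁆ - ⁅f x, f y⁆) + (f ⁅x', y⁆ - ⁅f x', f y⁆)
          rw [add_lie, map_add, map_add, add_lie]; abel)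
        (fun c x y => by
          show f ⁅c • x, y⁆ - ⁅f (c • x), f y⁆ = c • (f ⁅x, y⁆ - ⁅f x, f y⁆)
          rw [smul_lie, map_smul, map_smul, smul_lie, smul_sub])
        (fun x y y' => by
          show f ⁅x, y + y'⁆ - ⁅f x, f (y + y')⁆
              = (f ⁅x, y⁆ - ⁅f x, f y⁆) + (f ⁅x, y'⁆ - ⁅f x, f y'⁆)
          rw [lie_add, map_add, map_add, lie_add]; abel)
        (fun c x y => by
          show f ⁅x, c • y⁆ - ⁅f x, f (c • y)⁆ = c • (f ⁅x, y⁆ - ⁅f x, f y⁆)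
          rw [lie_smul, map_smul, map_smul,
            show ⁅f x, c • f y⁆ = c • ⁅f x, f y⁆ from lie_smul c (f x) (f y), smul_sub])
    have hD : D = 0 := by
      refine b.ext fun i => ?_
      simp only [LinearMap.zero_apply]
      refine b.ext fun j => ?_
      simp only [LinearMap.zero_apply]
      show f ⁅b i, b j⁆ - ⁅f (b i), f (b j)⁆ = 0
      rw [key, sub_self]
    intro x y
    have h0 : D x y = 0 := by rw [hD]; rfl
    have h1 : f ⁅x, y⁆ - ⁅f x, f y⁆ = 0 := h0
    exact sub_eq_zero.mp h1
  refine ⟨{ toLinearMap := f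
            map_lie' := fun {x y} => hmaplie x y
            invFun := gAux b
            left_inv := fun x => by
              have := congrArg (fun h => h x) hgf; simpa using this
            right_inv := hfg }⟩
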